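/- Let K be a commutative ring with 1 and G a group. The subgroup V_*(KG) is normal in V(KG) if and only if all elements of the form xx* with x ∈ V(KG) are central in KG. -/

import Mathlib

open MonoidAlgebra

variable (K G : Type*) [CommRing K] [Group G]

/-- The augmentation homomorphism of the group algebra `K[G]`. -/
noncomputable def aug : MonoidAlgebra K G →* K :=
  ((MonoidAlgebra.lift K K G) 1 : MonoidAlgebra K G →ₐ[K] K).toMonoidHom

/-- The group `V(KG)` of normalized units of the group algebra `K[G]`. -/
noncomputable def V : Subgroup (MonoidAlgebra K G)ˣ :=
  (Units.map (aug K G)).ker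

/-- The canonical involutive anti-automorphism `a ↦ a*` of the group algebra,
obtained by extending `g ↦ g⁻¹` linearly. -/
noncomputable def gstar : MonoidAlgebra K G → MonoidAlgebra K G :=
  MonoidAlgebra.mapDomain (fun g : G => g⁻¹)

variable {K G}

lemma gstar_one : gstar K G 1 = 1 := by
  unfold gstar
  rw [MonoidAlgebra.one_def, MonoidAlgebra.mapDomain_single, inv_one]

lemma gstar_gstar (a : MonoidAlgebra K G) : gstar K G (gstar K G a) = a := by
  unfold gstar
  ext g
  simp [← Finsupp.mapDomain_comp, Function.comp]

lemma gstar_mul (a b : MonoidAlgebra K G) :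
    gstar K G (a * b) = gstar K G b * gstar K G a := by
  induction a using MonoidAlgebra.induction_linear with
  | zero => simp [gstar]
  | add f g hf hg =>
      simp [gstar, add_mul, mul_add, MonoidAlgebra.mapDomain_add] at hf hg ⊢
      rw [hf, hg]
  | single g c =>
    induction b using MonoidAlgebra.induction_linear with
    | zero => simp [gstar]
    | add f' g' hf hg =>
        simp [gstar, add_mul, mul_add, MonoidAlgebra.mapDomain_add] at hf hg ⊢
        rw [hf, hg]
    | single h d =>
      show gstar K G (MonoidAlgebra.single g c * MonoidAlgebra.single h d) = _
      rw [MonoidAlgebra.single_mul_single]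
      unfold gstar
      simp only [MonoidAlgebra.mapDomain_single, mul_inv_rev]
      rw [MonoidAlgebra.single_mul_single, mul_comm d c]

variable (K G)

/-- The subgroup of unitary units: units `u` with `u* = u⁻¹`. -/
noncomputable def unitaryUnits : Subgroup (MonoidAlgebra K G)ˣ where
  carrier := {u | gstar K G ↑u = ↑u⁻¹}
  one_mem' := by simpa using gstar_one
  mul_mem' := by
    intro u v hu hv
    show gstar K G ↑(u * v) = ↑(u * v)⁻¹
    rw [Units.val_mul, gstar_mul, hu, hv, mul_inv_rev, Units.val_mul]
  inv_mem' := by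
    intro u hu
    have hu' : gstar K G ↑u = ↑u⁻¹ := hu
    show gstar K G ↑u⁻¹ = ↑u⁻¹⁻¹
    rw [inv_inv, ← hu', gstar_gstar]

/-- The group `V_*(KG)` of unitary normalized units. -/
noncomputable def Vstar : Subgroup (MonoidAlgebra K G)ˣ :=
  V K G ⊓ unitaryUnits K G

/-- `x ∈ K[G]` is *unitary* if it is invertible with `x* = x⁻¹`,
equivalently `x ⬝ x* = x* ⬝ x = 1`. -/
def IsUnitaryElem (x : MonoidAlgebra K G) : Prop :=
  x * gstar K G x = 1 ∧ gstar K G x * x = 1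

/-- `ḡ`: the sum in `K[G]` of the distinct powers of `g`. -/
noncomputable def gbar (g : G) : MonoidAlgebra K G :=
  ∑ i ∈ Finset.range (orderOf g), (MonoidAlgebra.of K G g) ^ i

/-- The bicyclic unit `u_{g,h} = 1 + (g-1)hḡ`. -/
noncomputable def bicyclic (g h : G) : MonoidAlgebra K G :=
  1 + (MonoidAlgebra.of K G g - 1) * MonoidAlgebra.of K G h * gbar K G g

variable {K G}

lemma aug_single' (g : G) (c : K) : aug K G (MonoidAlgebra.single g c) = c := by
  show ((MonoidAlgebra.lift K K G) 1) (MonoidAlgebra.single g c) = c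
  rw [MonoidAlgebra.lift_single]
  simp

lemma aug_gstar (a : MonoidAlgebra K G) : aug K G (gstar K G a) = aug K G a := by
  show ((MonoidAlgebra.lift K K G) 1) (gstar K G a) = ((MonoidAlgebra.lift K K G) 1) a
  induction a using MonoidAlgebra.induction_linear with
  | zero => simp [gstar]
  | add f g hf hg =>
      unfold gstar at hf hg ⊢
      rw [MonoidAlgebra.mapDomain_add, map_add, hf, hg, map_add]
  | single g c =>
      unfold gstar
      rw [MonoidAlgebra.mapDomain_single]
      show ((MonoidAlgebra.lift K K G) 1) (MonoidAlgebra.single g⁻¹ c)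
        = ((MonoidAlgebra.lift K K G) 1) (MonoidAlgebra.single g c)
      rw [MonoidAlgebra.lift_single, MonoidAlgebra.lift_single]
      simp

lemma mem_V_iff (u : (MonoidAlgebra K G)ˣ) : u ∈ V K G ↔ aug K G ↑u = 1 := by
  rw [V, MonoidHom.mem_ker, Units.ext_iff]
  simp

lemma central_of_comm (c : MonoidAlgebra K G)
    (h : ∀ g : G, c * MonoidAlgebra.of K G g = MonoidAlgebra.of K G g * c) :
    ∀ a : MonoidAlgebra K G, c * a = a * c := by
  intro a
  induction a using MonoidAlgebra.induction_linear with
  | zero => simp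
  | add f g hf hg => rw [mul_add, add_mul, hf, hg]
  | single g k =>
      have hs : (MonoidAlgebra.single g k : MonoidAlgebra K G)
          = k • MonoidAlgebra.of K G g := by
        simp [MonoidAlgebra.of_apply, MonoidAlgebra.smul_single']
      rw [hs, mul_smul_comm, smul_mul_assoc, h]

lemma gstar_val_mul_inv (x : (MonoidAlgebra K G)ˣ) :
    gstar K G ↑x * gstar K G ↑x⁻¹ = 1 := by
  rw [← gstar_mul]
  norm_cast
  rw [inv_mul_cancel]
  exact gstar_one

lemma gstar_inv_mul_val (x : (MonoidAlgebra K G)ˣ) :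
    gstar K G ↑x⁻¹ * gstar K G ↑x = 1 := by
  rw [← gstar_mul]
  norm_cast
  rw [mul_inv_cancel]
  exact gstar_one

lemma gstar_of (g : G) :
    gstar K G (MonoidAlgebra.of K G g) = MonoidAlgebra.of K G g⁻¹ := by
  unfold gstar
  simp [MonoidAlgebra.of_apply, MonoidAlgebra.mapDomain_single]

lemma ofHom_mem_V (g : G) : (MonoidAlgebra.of K G).toHomUnits g ∈ V K G := by
  rw [mem_V_iff, MonoidHom.coe_toHomUnits, MonoidAlgebra.of_apply, aug_single']

lemma ofHom_mem_unitary (g : G) :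
    (MonoidAlgebra.of K G).toHomUnits g ∈ unitaryUnits K G := by
  show gstar K G ↑((MonoidAlgebra.of K G).toHomUnits g)
    = ↑((MonoidAlgebra.of K G).toHomUnits g)⁻¹
  rw [← map_inv, MonoidHom.coe_toHomUnits, MonoidHom.coe_toHomUnits, gstar_of]

/-- **Corollary 2.2**: `V_*(KG)` is normal in `V(KG)` iff all elements of the form `xx*`
with `x ∈ V(KG)` are central in `KG`. -/
theorem Vstar_normal_iff_central (K : Type*) [CommRing K] (G : Type*) [Group G] :
    ((Vstar K G).subgroupOf (V K G)).Normal ↔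
      ∀ x ∈ V K G, ∀ a : MonoidAlgebra K G,
        ((x : MonoidAlgebra K G) * gstar K G x) * a =
          a * ((x : MonoidAlgebra K G) * gstar K G x) := by
  constructor
  · intro hN x hx a
    set s : MonoidAlgebra K G := gstar K G ↑x with hs
    set t : MonoidAlgebra K G := gstar K G ↑x⁻¹ with ht
    have hst : s * t = 1 := gstar_val_mul_inv x
    have hts : t * s = 1 := gstar_inv_mul_val x
    let S : (MonoidAlgebra K G)ˣ := ⟨s, t, hst, hts⟩
    -- S * x commutes with all group-element units
    have keyU : ∀ g : G, (MonoidAlgebra.of K G).toHomUnits g * (S * x)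
        = (S * x) * (MonoidAlgebra.of K G).toHomUnits g := by
      intro g
      set OG : (MonoidAlgebra K G)ˣ := (MonoidAlgebra.of K G).toHomUnits g with hOG
      set OGi : (MonoidAlgebra K G)ˣ := (MonoidAlgebra.of K G).toHomUnits g⁻¹ with hOGi
      have hg : (⟨OGi, ofHom_mem_V g⁻¹⟩ : V K G)
          ∈ (Vstar K G).subgroupOf (V K G) := by
        rw [Subgroup.mem_subgroupOf]
        exact ⟨ofHom_mem_V g⁻¹, ofHom_mem_unitary g⁻¹⟩
      have hconj := hN.conj_mem _ hg ⟨x, hx⟩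
      rw [Subgroup.mem_subgroupOf] at hconj
      have hu : gstar K G ↑(x * OGi * x⁻¹) = ↑(x * OGi * x⁻¹)⁻¹ := hconj.2
      have hOGix : OGi⁻¹ = OG := by rw [hOGi, hOG, ← map_inv, inv_inv]
      have hgs : gstar K G (↑OGi : MonoidAlgebra K G) = ↑OG := by
        rw [hOGi, hOG, MonoidHom.coe_toHomUnits, MonoidHom.coe_toHomUnits,
          gstar_of, inv_inv]
      rw [Units.val_mul, Units.val_mul, gstar_mul, gstar_mul, hgs] at hu
      -- hu : t * (↑OG * s) = ↑(x * OGi * x⁻¹)⁻¹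
      have hunit : S⁻¹ * OG * S = x * OG * x⁻¹ := by
        have h1 : S⁻¹ * OG * S = (x * OGi * x⁻¹)⁻¹ := by
          apply Units.ext
          rw [Units.val_mul, Units.val_mul, ← hu]
          show t * ↑OG * s = t * (↑OG * s)
          rw [mul_assoc]
        rw [h1, mul_inv_rev, mul_inv_rev, hOGix, inv_inv, mul_assoc]
      calc OG * (S * x) = S * (S⁻¹ * OG * S) * x := by group
        _ = S * (x * OG * x⁻¹) * x := by rw [hunit]
        _ = (S * x) * OG := by group
    have key : ∀ g : G, (s * ↑x) * MonoidAlgebra.of K G g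
        = MonoidAlgebra.of K G g * (s * ↑x) := by
      intro g
      have := congrArg Units.val (keyU g)
      simpa [Units.val_mul, MonoidHom.coe_toHomUnits, mul_assoc] using this.symm
    have hc := central_of_comm _ key
    have hxs : (↑x : MonoidAlgebra K G) * s = s * ↑x := by
      have h1 : (S * x) * x = x * (S * x) := by
        apply Units.ext
        rw [Units.val_mul, Units.val_mul, Units.val_mul, Units.val_mul]
        exact hc ↑x
      have h2 : S * x = x * S := by
        have := mul_right_cancel (a := S * x) (b := x) (c := x * S)
          (by rw [h1]; group)
        exact this
      have := congrArg Units.val h2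
      simpa [Units.val_mul] using this.symm
    rw [hxs]
    exact hc a
  · intro H
    constructor
    intro n hn g
    rw [Subgroup.mem_subgroupOf] at hn ⊢
    obtain ⟨hnV, hnU⟩ := hn
    set x : (MonoidAlgebra K G)ˣ := ↑g with hxdef
    set u : (MonoidAlgebra K G)ˣ := ↑n with hudef
    set s : MonoidAlgebra K G := gstar K G ↑x with hs
    set t : MonoidAlgebra K G := gstar K G ↑x⁻¹ with ht
    have hst : s * t = 1 := gstar_val_mul_inv x
    have hts : t * s = 1 := gstar_inv_mul_val x
    have hsg : gstar K G s = ↑x := by rw [hs, gstar_gstar]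
    let S : (MonoidAlgebra K G)ˣ := ⟨s, t, hst, hts⟩
    have hxstarV : S ∈ V K G := by
      rw [mem_V_iff]
      show aug K G s = 1
      rw [hs, aug_gstar, ← mem_V_iff]
      exact g.2
    have hcent := H S hxstarV
    have hcent' : ∀ a : MonoidAlgebra K G, (s * ↑x) * a = a * (s * ↑x) := by
      intro a
      have h1 := hcent a
      rw [show gstar K G (↑S : MonoidAlgebra K G) = ↑x from hsg] at h1
      exact h1
    have hnU' : gstar K G (↑u : MonoidAlgebra K G) = ↑u⁻¹ := hnU
    have hcommU : (S * x) * u⁻¹ = u⁻¹ * (S * x) := by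
      apply Units.ext
      rw [Units.val_mul, Units.val_mul, Units.val_mul, Units.val_mul]
      exact hcent' ↑u⁻¹
    have hunit2 : S⁻¹ * u⁻¹ * S = x * u⁻¹ * x⁻¹ := by
      calc S⁻¹ * u⁻¹ * S = S⁻¹ * (u⁻¹ * (S * x)) * x⁻¹ := by group
        _ = S⁻¹ * ((S * x) * u⁻¹) * x⁻¹ := by rw [hcommU]
        _ = x * u⁻¹ * x⁻¹ := by group
    refine ⟨SetLike.coe_mem _, ?_⟩
    show gstar K G ↑((g * n * g⁻¹ : V K G) : (MonoidAlgebra K G)ˣ)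
      = ↑(((g * n * g⁻¹ : V K G) : (MonoidAlgebra K G)ˣ))⁻¹
    have hval : (((g * n * g⁻¹ : V K G)) : (MonoidAlgebra K G)ˣ) = x * u * x⁻¹ := rfl
    rw [hval, Units.val_mul, Units.val_mul, gstar_mul, gstar_mul, hnU',
      show (x * u * x⁻¹)⁻¹ = x * u⁻¹ * x⁻¹ by group,
      Units.val_mul, Units.val_mul]
    -- goal : t * (↑u⁻¹ * s) = ↑x * ↑u⁻¹ * ↑x⁻¹
    have := congrArg Units.val hunit2
    rw [Units.val_mul, Units.val_mul, Units.val_mul, Units.val_mul] at this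
    rw [← this]
    show t * (↑u⁻¹ * s) = t * ↑u⁻¹ * s
    rw [mul_assoc]
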